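/- arXiv:2010.08077 — 2 statements merged into one kernel-verified Lean document; each statement's English description precedes it below -/
import Mathlib

section
/- The trigonometric Fay identity holds: for the function Φ(z,u) = coth(z) + coth(u), one has Φ(z,u₁)Φ(w,u₂) = Φ(z,u₁−u₂)Φ(z+w,u₂) + Φ(w,u₂−u₁)Φ(z+w,u₁), whenever all arguments have nonvanishing sinh. -/
open Complex
set_option maxHeartbeats 2000000 in

lemma fay_key (z w u₁ u₂ : ℂ) :
    sinh (z + u₁) * sinh (w + u₂) * (sinh (u₁ - u₂) * (sinh (u₂ - u₁) * sinh (z + w)))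
    = sinh (z + (u₁ - u₂)) * sinh ((z + w) + u₂) * (sinh (u₂ - u₁) * (sinh w * sinh u₁))
    + sinh (w + (u₂ - u₁)) * sinh ((z + w) + u₁) * (sinh (u₁ - u₂) * (sinh z * sinh u₂)) := by
  have e : ∀ x : ℂ, sinh x = (exp x - exp (-x)) / 2 := fun x => by
    rw [eq_div_iff (two_ne_zero), mul_comm, two_sinh]
  simp only [e, neg_add, neg_sub, Complex.exp_add, Complex.exp_sub, Complex.exp_neg]
  have hz := Complex.exp_ne_zero z
  have hw := Complex.exp_ne_zero w
  have h1 := Complex.exp_ne_zero u₁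
  have h2 := Complex.exp_ne_zero u₂
  field_simp
  ring

/-- The trigonometric Fay identity for `Φ(z,u) = sinh(z+u)/(sinh z · sinh u)`:
`Φ(z,u₁)Φ(w,u₂) = Φ(z,u₁−u₂)Φ(z+w,u₂) + Φ(w,u₂−u₁)Φ(z+w,u₁)`. -/
theorem trig_fay (z w u₁ u₂ : ℂ)
    (hz : sinh z ≠ 0) (hw : sinh w ≠ 0)
    (h1 : sinh u₁ ≠ 0) (h2 : sinh u₂ ≠ 0)
    (h12 : sinh (u₁ - u₂) ≠ 0) (h21 : sinh (u₂ - u₁) ≠ 0)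
    (hzw : sinh (z + w) ≠ 0) :
    (sinh (z + u₁) / (sinh z * sinh u₁)) * (sinh (w + u₂) / (sinh w * sinh u₂)) =
      (sinh (z + (u₁ - u₂)) / (sinh z * sinh (u₁ - u₂))) *
        (sinh ((z + w) + u₂) / (sinh (z + w) * sinh u₂))
      + (sinh (w + (u₂ - u₁)) / (sinh w * sinh (u₂ - u₁))) *
        (sinh ((z + w) + u₁) / (sinh (z + w) * sinh u₁)) := by
  have key := fay_key z w u₁ u₂
  field_simp
  linear_combination key
end

section
/- Action of the rank-1 determinant operator on monomial symmetric functions: with δ_j = N − j and Δ the Vandermonde determinant, one has Δ^{-1} det_{i,j}[x_i^{δ_j} θ_ω(u t^{δ_j} q^{x_i∂_i})] · m_λ = (1/|S_λ|) Σ_{π∈S_N} ∏_{i=1}^N θ_ω(u t^{δ_i} q^{π(λ)_i}) · s_{π(λ)}, where s_{π(λ)} denotes the (possibly zero or sign-adjusted) generalized Schur function Δ^{-1} det(x_i^{π(λ)_j + δ_j}). -/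
open MvPolynomial

noncomputable section

/-- The theta function `θ_ω(y) = Σ_{n∈ℤ} ω^((n²−n)/2) (−y)^n`. -/
def theta (ω y : ℂ) : ℂ := ∑' n : ℤ, ω ^ ((n ^ 2 - n) / 2).toNat * (-y) ^ n

/-- The monomial symmetric function `m_λ = |S_λ|⁻¹ Σ_{σ∈S_N} x^{σ(λ)}`. -/
def msym (N : ℕ) (lam : Fin N → ℕ) : MvPolynomial (Fin N) ℂ :=
  ((Fintype.card {σ : Equiv.Perm (Fin N) // lam ∘ σ = lam} : ℂ))⁻¹ •
    ∑ σ : Equiv.Perm (Fin N),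
      monomial (Finsupp.equivFunOnFinite.symm (lam ∘ σ)) (1 : ℂ)

/-- The determinant operator `det_{ij}[x_i^{δ_j} θ_ω(u t^{δ_j} q^{x_i ∂_i})]`
with `δ_j = N − j`, applied to a polynomial `p`; `q^{x_i∂_i}` acts on a monomial
`x^α` by multiplication by `q^{α_i}`. -/
def detOp (N : ℕ) (q t u ω : ℂ) (p : MvPolynomial (Fin N) ℂ) :
    MvPolynomial (Fin N) ℂ :=
  ∑ σ : Equiv.Perm (Fin N),
    (Equiv.Perm.sign σ : ℤ) •
      (AddMonoidAlgebra.coeff p).sum (fun α a =>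
        (∏ i : Fin N, theta ω (u * t ^ (N - 1 - (σ i : ℕ)) * q ^ (α i))) •
          monomial (α + Finsupp.equivFunOnFinite.symm fun i : Fin N =>
            N - 1 - (σ i : ℕ)) a)

lemma aux_mono (N : ℕ) (e : Fin N → ℕ) :
    (monomial (Finsupp.equivFunOnFinite.symm e) (1 : ℂ) : MvPolynomial (Fin N) ℂ)
      = ∏ i : Fin N, X i ^ e i := by
  rw [← prod_X_pow_eq_monomial,
    Finset.prod_subset (Finset.subset_univ _) (fun x _ hx => by
      simp only [Finsupp.mem_support_iff, not_not] at hx; simp [hx])]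
  simp


/-- Action of the determinant operator on monomial symmetric functions:
`det[x_i^{δ_j} θ_ω(u t^{δ_j} q^{x_i∂_i})] m_λ
  = |S_λ|⁻¹ Σ_{π∈S_N} (∏_i θ_ω(u t^{δ_i} q^{λ_{π(i)}})) det(x_i^{λ_{π(j)}+δ_j})`,
i.e. the identity `Ô m_λ = |S_λ|⁻¹ Σ_π (∏_i θ_ω(u t^{δ_i} q^{π(λ)_i})) s_{π(λ)}`
multiplied through by the Vandermonde determinant `Δ`, where
`s_{π(λ)} = Δ⁻¹ det(x_i^{π(λ)_j + δ_j})`. -/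
theorem dell_detOp_on_msym (N : ℕ) (q t u ω : ℂ)
    (lam : Fin N → ℕ) (hlam : Antitone lam) :
    detOp N q t u ω (msym N lam) =
      ((Fintype.card {σ : Equiv.Perm (Fin N) // lam ∘ σ = lam} : ℂ))⁻¹ •
        ∑ π : Equiv.Perm (Fin N),
          (∏ i : Fin N, theta ω (u * t ^ (N - 1 - (i : ℕ)) * q ^ lam (π i))) •
            Matrix.det (Matrix.of fun i j : Fin N =>
              (X i : MvPolynomial (Fin N) ℂ) ^ (lam (π j) + (N - 1 - (j : ℕ)))) := by
  classical
  set c : ℂ := ((Fintype.card {σ : Equiv.Perm (Fin N) // lam ∘ σ = lam} : ℂ))⁻¹ with hc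
  -- Step 1: compute detOp on msym
  have step1 : detOp N q t u ω (msym N lam) =
      ∑ σ' : Equiv.Perm (Fin N), ∑ σ : Equiv.Perm (Fin N),
        c • ((Equiv.Perm.sign σ' : ℤ) •
          ((∏ i : Fin N, theta ω (u * t ^ (N - 1 - (σ' i : ℕ)) * q ^ lam (σ i))) •
            ∏ i : Fin N, (X i : MvPolynomial (Fin N) ℂ) ^ (lam (σ i) + (N - 1 - (σ' i : ℕ))))) := by
    rw [detOp, msym]
    refine Finset.sum_congr rfl fun σ' _ => ?_
    rw [AddMonoidAlgebra.coeff_smul, AddMonoidAlgebra.coeff_sum]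
    rw [Finsupp.sum_smul_index' (by intro i; simp)]
    rw [← Finsupp.sum_finsetSum_index (by intro i; simp) (by intro i x y; simp [mul_add, smul_add]),
      Finset.smul_sum]
    refine Finset.sum_congr rfl fun σ _ => ?_
    rw [← single_eq_monomial, AddMonoidAlgebra.coeff_single, Finsupp.sum_single_index (by simp)]
    have hβ : Finsupp.equivFunOnFinite.symm (lam ∘ σ)
        + (Finsupp.equivFunOnFinite.symm fun i : Fin N => N - 1 - (σ' i : ℕ))
        = Finsupp.equivFunOnFinite.symm (fun i : Fin N => lam (σ i) + (N - 1 - (σ' i : ℕ))) := by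
      ext i; simp
    rw [hβ]
    have hmono := aux_mono N (fun i : Fin N => lam (σ i) + (N - 1 - (σ' i : ℕ)))
    rw [show ((Fintype.card {σ : Equiv.Perm (Fin N) // lam ∘ σ = lam} : ℂ))⁻¹ • (1:ℂ) = c • (1:ℂ) by
      rw [hc], ← smul_monomial, hmono]
    simp only [Finsupp.coe_equivFunOnFinite_symm, Function.comp_apply,
      ← Int.cast_smul_eq_zsmul ℂ, smul_smul]
    congr 1
    ring
  rw [step1]
  have step2 : (c • ∑ π : Equiv.Perm (Fin N),
      (∏ i : Fin N, theta ω (u * t ^ (N - 1 - (i : ℕ)) * q ^ lam (π i))) •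
        Matrix.det (Matrix.of fun i j : Fin N =>
          (X i : MvPolynomial (Fin N) ℂ) ^ (lam (π j) + (N - 1 - (j : ℕ)))))
      = ∑ π : Equiv.Perm (Fin N), ∑ τ : Equiv.Perm (Fin N),
          c • ((∏ i : Fin N, theta ω (u * t ^ (N - 1 - (i : ℕ)) * q ^ lam (π i))) •
            ((Equiv.Perm.sign τ : ℤ) •
              ∏ j : Fin N, (X (τ j) : MvPolynomial (Fin N) ℂ) ^ (lam (π j) + (N - 1 - (j : ℕ))))) := by
    rw [Finset.smul_sum]
    refine Finset.sum_congr rfl fun π _ => ?_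
    rw [Matrix.det_apply, Finset.smul_sum, Finset.smul_sum]
    refine Finset.sum_congr rfl fun τ _ => ?_
    simp [Matrix.of_apply, Units.smul_def]
  rw [step2]
  conv_rhs => rw [Finset.sum_comm]
  refine Fintype.sum_equiv (Equiv.inv (Equiv.Perm (Fin N))) _ _ fun σ' => ?_
  refine Fintype.sum_equiv (Equiv.mulRight σ'⁻¹) _ _ fun σ => ?_
  simp only [Equiv.inv_apply, Equiv.coe_mulRight]
  have hθ : (∏ i : Fin N, theta ω (u * t ^ (N - 1 - (σ' i : ℕ)) * q ^ lam (σ i)))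
      = ∏ i : Fin N, theta ω (u * t ^ (N - 1 - (i : ℕ)) * q ^ lam ((σ * σ'⁻¹) i)) := by
    rw [← Equiv.prod_comp σ'
      (fun i => theta ω (u * t ^ (N - 1 - (i : ℕ)) * q ^ lam ((σ * σ'⁻¹) i)))]
    refine Finset.prod_congr rfl fun i _ => ?_
    simp [Equiv.Perm.mul_apply]
  have hX : (∏ i : Fin N, (X i : MvPolynomial (Fin N) ℂ) ^ (lam (σ i) + (N - 1 - (σ' i : ℕ))))
      = ∏ j : Fin N, (X (σ'⁻¹ j) : MvPolynomial (Fin N) ℂ)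
          ^ (lam ((σ * σ'⁻¹) j) + (N - 1 - (j : ℕ))) := by
    rw [← Equiv.prod_comp σ'
      (fun j => (X (σ'⁻¹ j) : MvPolynomial (Fin N) ℂ)
        ^ (lam ((σ * σ'⁻¹) j) + (N - 1 - (j : ℕ))))]
    refine Finset.prod_congr rfl fun i _ => ?_
    simp [Equiv.Perm.mul_apply]
  rw [hθ, hX, Equiv.Perm.sign_inv]
  rw [smul_comm ((Equiv.Perm.sign σ' : ℤ)) (∏ i : Fin N, theta ω (u * t ^ (N - 1 - (i : ℕ)) * q ^ lam ((σ * σ'⁻¹) i)))]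
end
end
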